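/- Let b ≥ 2, φ = (1+√5)/2, ã_k = (b^k-1)/(b^2-1), and let h̃ be the piecewise linear function with h̃(ã_k) = φ^k/√5. Define H̃(x) = ((b^2-1)x + 1)^{log_b φ}/√5. Then H̃ is concave on [0,∞), H̃(ã_k) = φ^k/√5 for all k ≥ 0, and h̃(x) ≤ H̃(x) for all x ≥ 0, with equality at each x = ã_k. -/

import Mathlib

open Real

/-- ã_k = (b^k-1)/(b^2-1) as a real number. -/
noncomputable def atil (b k : ℕ) : ℝ := ((b : ℝ) ^ k - 1) / ((b : ℝ) ^ 2 - 1)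

/-- `h` is the piecewise linear function through the points (a k, y k), k ≥ 0. -/
def IsPLThrough (a y : ℕ → ℝ) (h : ℝ → ℝ) : Prop :=
  ∀ k : ℕ, ∀ x ∈ Set.Icc (a k) (a (k + 1)),
    h x = y k + (x - a k) * (y (k + 1) - y k) / (a (k + 1) - a k)

theorem gold_lt_two' : goldenRatio < 2 := by
  rw [goldenRatio]
  nlinarith [Real.sq_sqrt (by norm_num : (5:ℝ) ≥ 0), Real.sqrt_nonneg 5]

/-- With φ the golden ratio and H̃(x) = ((b²-1)x+1)^{log_b φ}/√5: H̃ is concave on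
[0,∞), passes through the points (ã_k, φ^k/√5), and dominates the piecewise linear
interpolant h̃ of these points, with equality at each ã_k. -/
theorem stmt15 (b : ℕ) (hb : 2 ≤ b) (ht : ℝ → ℝ)
    (hht : IsPLThrough (atil b) (fun k => goldenRatio ^ k / Real.sqrt 5) ht)
    (Ht : ℝ → ℝ)
    (hHt : ∀ x : ℝ, Ht x
      = (((b : ℝ) ^ 2 - 1) * x + 1) ^ (Real.log goldenRatio / Real.log b) / Real.sqrt 5) :
    ConcaveOn ℝ (Set.Ici (0 : ℝ)) Ht ∧
    (∀ k : ℕ, Ht (atil b k) = goldenRatio ^ k / Real.sqrt 5) ∧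
    (∀ x : ℝ, 0 ≤ x → ht x ≤ Ht x) ∧
    (∀ k : ℕ, ht (atil b k) = Ht (atil b k)) := by
  have hb1 : (1:ℝ) < (b:ℝ) := by exact_mod_cast lt_of_lt_of_le one_lt_two hb
  have hbpos : (0:ℝ) < (b:ℝ) := lt_trans one_pos hb1
  set B : ℝ := (b:ℝ)^2 - 1 with hBdef
  have hBpos : 0 < B := by nlinarith
  set p : ℝ := Real.log goldenRatio / Real.log b with hpdef
  have hlogb : 0 < Real.log b := Real.log_pos hb1
  have hφ1 : 1 < goldenRatio := one_lt_goldenRatio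
  have hp0 : 0 < p := div_pos (Real.log_pos hφ1) hlogb
  have hp1 : p < 1 := by
    rw [hpdef, div_lt_one hlogb]
    exact Real.log_lt_log (lt_trans one_pos hφ1)
      (lt_of_lt_of_le gold_lt_two' (by exact_mod_cast hb))
  have hs5 : 0 < Real.sqrt 5 := Real.sqrt_pos.mpr (by norm_num)
  have hbp : (b:ℝ) ^ p = goldenRatio := by
    rw [Real.rpow_def_of_pos hbpos, hpdef, mul_div_cancel₀ _ (ne_of_gt hlogb),
      Real.exp_log (lt_trans one_pos hφ1)]
  -- value at atil k
  have hval : ∀ k : ℕ, Ht (atil b k) = goldenRatio ^ k / Real.sqrt 5 := by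
    intro k
    have h1 : B * atil b k + 1 = (b:ℝ)^k := by
      rw [atil, ← hBdef]
      field_simp
      ring
    rw [hHt, h1, ← Real.rpow_natCast (b:ℝ) k,
      ← Real.rpow_mul hbpos.le, mul_comm, Real.rpow_mul hbpos.le, hbp,
      Real.rpow_natCast]
  -- concavity
  have hconc : ConcaveOn ℝ (Set.Ici (0:ℝ)) Ht := by
    have hrc := Real.concaveOn_rpow hp0.le hp1.le
    constructor
    · exact convex_Ici 0
    · intro x hx y hy a c ha hc hac
      have hx' : B * x + 1 ∈ Set.Ici (0:ℝ) := by
        have : (0:ℝ) ≤ x := hx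
        have : 0 ≤ B * x := mul_nonneg hBpos.le this
        simp only [Set.mem_Ici]; linarith
      have hy' : B * y + 1 ∈ Set.Ici (0:ℝ) := by
        have : (0:ℝ) ≤ y := hy
        have : 0 ≤ B * y := mul_nonneg hBpos.le this
        simp only [Set.mem_Ici]; linarith
      have key := hrc.2 hx' hy' ha hc hac
      simp only [smul_eq_mul] at key ⊢
      rw [hHt, hHt, hHt]
      have heq : B * (a * x + c * y) + 1 = a * (B * x + 1) + c * (B * y + 1) := by
        ring_nf; nlinarith [hac]
      rw [heq, ← mul_div_assoc, ← mul_div_assoc, ← add_div]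
      gcongr
  have hmono : ∀ k : ℕ, atil b k < atil b (k + 1) := by
    intro k
    rw [atil, atil, ← hBdef]
    exact (div_lt_div_iff_of_pos_right hBpos).mpr (by
      have := pow_lt_pow_right₀ hb1 (by omega : k < k + 1); linarith)
  have hatil0 : ∀ k : ℕ, 0 ≤ atil b k := by
    intro k
    rw [atil, ← hBdef]
    apply div_nonneg _ hBpos.le
    have : (1:ℝ) ≤ (b:ℝ)^k := one_le_pow₀ hb1.le
    linarith
  -- chord inequality on each interval
  have hchord : ∀ k : ℕ, ∀ x ∈ Set.Icc (atil b k) (atil b (k+1)), ht x ≤ Ht x := by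
    intro k x hxmem
    obtain ⟨hx1, hx2⟩ := hxmem
    set a := atil b k with ha
    set c := atil b (k+1) with hc
    have hd : 0 < c - a := sub_pos.mpr (hmono k)
    set t : ℝ := (x - a) / (c - a) with htdef
    have ht0 : 0 ≤ t := div_nonneg (by linarith) hd.le
    have ht1 : t ≤ 1 := (div_le_one hd).mpr (by linarith)
    have hpt : (1 - t) * a + t * c = x := by
      have : t * (c - a) = x - a := by
        rw [htdef, div_mul_cancel₀ _ (ne_of_gt hd)]
      nlinarith [this]
    have key := hconc.2 (Set.mem_Ici.mpr (hatil0 k)) (Set.mem_Ici.mpr (hatil0 (k+1)))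
      (by linarith : (0:ℝ) ≤ 1 - t) ht0 (by ring)
    simp only [smul_eq_mul] at key
    rw [hpt] at key
    have hhtx := hht k x ⟨hx1, hx2⟩
    rw [hhtx]
    have : (fun k => goldenRatio ^ k / Real.sqrt 5) k
        + (x - a) * ((fun k => goldenRatio ^ k / Real.sqrt 5) (k+1)
          - (fun k => goldenRatio ^ k / Real.sqrt 5) k) / (c - a)
        = (1 - t) * Ht a + t * Ht c := by
      simp only [hval k, hval (k+1), ha, hc]
      rw [htdef]
      simp only [ha, hc]
      have hd' : atil b (k + 1) - atil b k ≠ 0 := ne_of_gt hd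
      field_simp
      ring
    rw [this]
    exact key
  refine ⟨hconc, hval, ?_, ?_⟩
  · -- domination
    intro x hx
    have hy1 : (1:ℝ) ≤ B * x + 1 := by nlinarith
    have hex : ∃ n : ℕ, B * x + 1 < (b:ℝ)^n := pow_unbounded_of_one_lt _ hb1
    have hnspec : B * x + 1 < (b:ℝ)^(Nat.find hex) := Nat.find_spec hex
    have hn0 : Nat.find hex ≠ 0 := by
      intro h
      rw [h, pow_zero] at hnspec; linarith
    obtain ⟨k, hk2⟩ : ∃ k, Nat.find hex = k + 1 := ⟨Nat.find hex - 1, by omega⟩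
    have hk : ¬ (B * x + 1 < (b:ℝ)^k) := Nat.find_min hex (by omega)
    rw [hk2] at hnspec
    push_neg at hk
    apply hchord k
    constructor
    · rw [atil, ← hBdef]
      rw [div_le_iff₀ hBpos]
      linarith
    · rw [atil, ← hBdef]
      rw [le_div_iff₀ hBpos]
      linarith [hnspec]
  · -- equality at atil k
    intro k
    have := hht k (atil b k) ⟨le_refl _, (hmono k).le⟩
    rw [this, hval k]
    simp
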